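/- In the stage game get-close-to-the-target, for any fixed pair of actions a₁, a₂ ∈ {1,…,n} and any fixed outcome o ∈ {player 1 wins, player 2 wins, draw}, the set of targets { k ∈ {1,…,n} : the round with actions a₁, a₂ and target k has outcome o } is an interval of integers (i.e., it is order-connected: if it contains k and k′ then it contains every integer between them). -/
import Mathlib


/-- Possible outcomes of a round of a zero-sum stage game. -/
inductive Outcome
  | P1Wins
  | P2Wins
  | Draw
deriving DecidableEq

/-- The outcome of a round of *get-close-to-the-target* with actions `a₁` (player 1),
`a₂` (player 2) and hidden target `k`: if `|aᵢ - k| < |a₋ᵢ - k|` then player `i` wins;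
if `a₁ = a₂ = a ≠ k` then player 1 wins if `a < k` and player 2 wins if `a > k`;
otherwise the round is a draw. -/
def outcome (a₁ a₂ k : ℤ) : Outcome :=
  if |a₁ - k| < |a₂ - k| then .P1Wins
  else if |a₂ - k| < |a₁ - k| then .P2Wins
  else if a₁ = a₂ ∧ a₁ ≠ k then (if a₁ < k then .P1Wins else .P2Wins)
  else .Draw

lemma outcome_char (a₁ a₂ k : ℤ) (o : Outcome) :
    outcome a₁ a₂ k = o ↔
      (o = .P1Wins ∧ ((a₁ < a₂ ∧ 2*k < a₁+a₂) ∨ (a₂ < a₁ ∧ a₁+a₂ < 2*k) ∨ (a₁ = a₂ ∧ a₁ < k))) ∨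
      (o = .P2Wins ∧ ((a₂ < a₁ ∧ 2*k < a₁+a₂) ∨ (a₁ < a₂ ∧ a₁+a₂ < 2*k) ∨ (a₁ = a₂ ∧ k < a₁))) ∨
      (o = .Draw ∧ ((a₁ ≠ a₂ ∧ 2*k = a₁+a₂) ∨ (a₁ = a₂ ∧ k = a₁))) := by
  unfold outcome
  rcases abs_cases (a₁ - k) with ⟨h1, h1'⟩ | ⟨h1, h1'⟩ <;>
    rcases abs_cases (a₂ - k) with ⟨h2, h2'⟩ | ⟨h2, h2'⟩ <;>
    rw [h1, h2] <;> split_ifs <;> cases o <;> simp_all <;> omega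

/-- In the stage game get-close-to-the-target, for any fixed pair of actions
`a₁, a₂ ∈ {1,…,n}` and any fixed outcome `o`, the set of targets
`{ k ∈ {1,…,n} : outcome a₁ a₂ k = o }` is an interval of integers: if it contains
`k` and `k''` then it contains every integer `k'` between them. -/
theorem stmt2 (n a₁ a₂ : ℤ) (hn : 1 ≤ n)
    (ha₁ : a₁ ∈ Finset.Icc 1 n) (ha₂ : a₂ ∈ Finset.Icc 1 n) (o : Outcome) :
    ∀ k k' k'' : ℤ,
      (k ∈ Finset.Icc 1 n ∧ outcome a₁ a₂ k = o) →
      (k'' ∈ Finset.Icc 1 n ∧ outcome a₁ a₂ k'' = o) →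
      k ≤ k' → k' ≤ k'' →
      (k' ∈ Finset.Icc 1 n ∧ outcome a₁ a₂ k' = o) := by
  intro k k' k'' ⟨hk, ho⟩ ⟨hk'', ho''⟩ h1 h2
  simp only [Finset.mem_Icc] at *
  rw [outcome_char] at ho ho'' ⊢
  rcases ho with ⟨rfl, h⟩ | ⟨rfl, h⟩ | ⟨rfl, h⟩ <;>
    rcases ho'' with ⟨he, h'⟩ | ⟨he, h'⟩ | ⟨he, h'⟩ <;>
    first
      | exact Outcome.noConfusion he
      | exact ⟨⟨by omega, by omega⟩, Or.inl ⟨rfl, by omega⟩⟩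
      | exact ⟨⟨by omega, by omega⟩, Or.inr (Or.inl ⟨rfl, by omega⟩)⟩
      | exact ⟨⟨by omega, by omega⟩, Or.inr (Or.inr ⟨rfl, by omega⟩)⟩
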